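/- arXiv:2510.08310 — 2 statements merged into one kernel-verified Lean document; each statement's English description precedes it below -/
import Mathlib

section
/- If n ≥ 4 is even, then the prism graph C_n □ K_2 has exactly two hamiltonian cycles containing all n pillar edges, and both are meandering (no two edges of the top cycle or of the base cycle are adjacent in the cycle). -/
open SimpleGraph

/-- Vertex type of the `n`-prism `C_n □ K_2`: the base cycle consists of the
vertices `(i, false)` (the `sᵢ`) and the top cycle of the vertices `(i, true)` (the `tᵢ`). -/
abbrev PV (n : ℕ) := ZMod n × Bool

/-- The prism graph `C_n □ K_2`. -/
def prismG (n : ℕ) : SimpleGraph (PV n) :=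
  SimpleGraph.fromRel fun u v =>
    (u.1 = v.1 ∧ u.2 ≠ v.2) ∨ (u.2 = v.2 ∧ v.1 = u.1 + 1)

/-- The pillar edge `sᵢtᵢ`. -/
def pillar (n : ℕ) (i : ZMod n) : Sym2 (PV n) :=
  s(((i, false) : PV n), ((i, true) : PV n))

/-- The base-cycle edge `sᵢs_{i+1}`. -/
def baseEdge (n : ℕ) (i : ZMod n) : Sym2 (PV n) :=
  s(((i, false) : PV n), ((i + 1, false) : PV n))

/-- The top-cycle edge `tᵢt_{i+1}`. -/
def topEdge (n : ℕ) (i : ZMod n) : Sym2 (PV n) :=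
  s(((i, true) : PV n), ((i + 1, true) : PV n))

def IsPillar {n : ℕ} (e : Sym2 (PV n)) : Prop := ∃ i, e = pillar n i
def IsBaseEdge {n : ℕ} (e : Sym2 (PV n)) : Prop := ∃ i, e = baseEdge n i
def IsTopEdge {n : ℕ} (e : Sym2 (PV n)) : Prop := ∃ i, e = topEdge n i

/-- A hamiltonian cycle of the prism is *meandering* if no two of its edges lying on the
top cycle or on the base cycle are adjacent (share a vertex; in a cycle, edges sharing a
vertex are exactly the consecutive ones). -/
def Meandering {n : ℕ} {v : PV n} (C : (prismG n).Walk v v) : Prop :=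
  ∀ e ∈ C.edges, ∀ f ∈ C.edges, e ≠ f →
    ((IsBaseEdge e ∧ IsBaseEdge f) ∨ (IsTopEdge e ∧ IsTopEdge f)) → ¬ ∃ x, x ∈ e ∧ x ∈ f

/-- Explicit edge list of the Tutte Fragment on 15 vertices, following Tutte (1946):
`0 = a`, `1 = b` (the two bottom corner 2-valent vertices), `2 = c` (the apex 2-valent
vertex); `3, …, 14` are the internal 3-valent vertices `p₁, …, p₁₂`. -/
def TFedges : List (Fin 15 × Fin 15) :=
  [(0,4),(4,5),(5,6),(6,2),(1,7),(7,8),(8,2),(0,14),(14,1),(4,9),(9,3),(3,10),(10,7),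
   (5,11),(11,12),(6,13),(13,8),(13,12),(12,10),(11,9),(3,14)]

/-- The Tutte Fragment as a simple graph on `Fin 15`. -/
def TF : SimpleGraph (Fin 15) :=
  SimpleGraph.fromRel fun x y => (x, y) ∈ TFedges

/-- The attachment port of the prism vertex `u` used for the former prism edge towards the
neighbour `w`, after the TF-inflations prescribed by the set `S` of inflated vertices and the
orientation choice `orient`.  A non-inflated vertex keeps its single representative (port `0`);
for an inflated vertex the vertex `c = 2` of its Tutte Fragment is incident with the pillar,
and the vertices `a = 0`, `b = 1` are attached to the two cycle neighbours according to
`orient u`. -/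
def port {n : ℕ} (S : Finset (PV n)) (orient : PV n → Bool) (u w : PV n) : Fin 15 :=
  if u ∉ S then 0
  else if u.1 = w.1 then 2
  else if w.1 = u.1 + 1 then (if orient u then 0 else 1)
  else (if orient u then 1 else 0)

/-- Vertex type of the TF-inflated prism: an inflated prism vertex `v ∈ S` is replaced by the
15 vertices `(v, k)` of a fresh copy of the Tutte Fragment, while a non-inflated vertex `v`
is represented by `(v, 0)` alone. -/
def InflV (n : ℕ) (S : Finset (PV n)) := {x : PV n × Fin 15 // x.1 ∈ S ∨ x.2 = 0}

/-- The graph obtained from the prism `C_n □ K_2` by TF-inflating every vertex in `S`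
(with orientations `orient`, and with the `c`-vertex of each fragment incident to the
corresponding pillar). -/
def inflPrism (n : ℕ) (S : Finset (PV n)) (orient : PV n → Bool) :
    SimpleGraph (InflV n S) :=
  SimpleGraph.fromRel fun x y =>
    (x.val.1 = y.val.1 ∧ x.val.1 ∈ S ∧ TF.Adj x.val.2 y.val.2) ∨
    (x.val.1 ≠ y.val.1 ∧ (prismG n).Adj x.val.1 y.val.1 ∧
      x.val.2 = port S orient x.val.1 y.val.1 ∧
      y.val.2 = port S orient y.val.1 x.val.1)

/-- The vertex of the inflated prism representing the attachment port of the prism vertex `u`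
towards its prism neighbour `w`. -/
def liftV {n : ℕ} (S : Finset (PV n)) (orient : PV n → Bool) (u w : PV n) :
    InflV n S :=
  ⟨(u, port S orient u w), by
    by_cases h : u ∈ S
    · exact Or.inl h
    · exact Or.inr (by simp [port, h])⟩

/-- The set of (indices of) pillars of the prism carrying at least one TF-inflated vertex. -/
def inflatedPillars {n : ℕ} (S : Finset (PV n)) : Set (ZMod n) :=
  {i : ZMod n | ((i, false) : PV n) ∈ S ∨ ((i, true) : PV n) ∈ S}

instance (n : ℕ) (S : Finset (PV n)) : DecidableEq (InflV n S) := by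
  unfold InflV; infer_instance

section Aux

variable {n : ℕ}

lemma zmod_cast_inj (hn : 4 ≤ n) {a b : ℕ} (ha : a < n) (hb : b < n)
    (h : (a : ZMod n) = (b : ZMod n)) : a = b := by
  haveI : NeZero n := ⟨by omega⟩
  have := congrArg ZMod.val h
  rwa [ZMod.val_cast_of_lt ha, ZMod.val_cast_of_lt hb] at this

lemma zmod_one_ne_zero (hn : 4 ≤ n) : (1 : ZMod n) ≠ 0 := by
  intro h
  have : ((1:ℕ) : ZMod n) = ((0:ℕ) : ZMod n) := by push_cast; simpa using h
  have := zmod_cast_inj hn (by omega) (by omega) this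
  omega

lemma zmod_two_ne_zero (hn : 4 ≤ n) : (2 : ZMod n) ≠ 0 := by
  intro h
  have : ((2:ℕ) : ZMod n) = ((0:ℕ) : ZMod n) := by push_cast; simpa using h
  have := zmod_cast_inj hn (by omega) (by omega) this
  omega

lemma prism_adj {u v : PV n} :
    (prismG n).Adj u v ↔ u ≠ v ∧
      (((u.1 = v.1 ∧ u.2 ≠ v.2) ∨ (u.2 = v.2 ∧ v.1 = u.1 + 1)) ∨
       ((v.1 = u.1 ∧ v.2 ≠ u.2) ∨ (v.2 = u.2 ∧ u.1 = v.1 + 1))) := by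
  rfl

lemma pillar_ne_base {i j : ZMod n} : pillar n i ≠ baseEdge n j := by
  simp [pillar, baseEdge, Sym2.eq_iff, Prod.ext_iff]

lemma pillar_ne_top {i j : ZMod n} : pillar n i ≠ topEdge n j := by
  simp [pillar, topEdge, Sym2.eq_iff, Prod.ext_iff]

lemma base_ne_top {i j : ZMod n} : baseEdge n i ≠ topEdge n j := by
  simp [baseEdge, topEdge, Sym2.eq_iff, Prod.ext_iff]

lemma base_eq_iff (hn : 4 ≤ n) {i j : ZMod n} : baseEdge n i = baseEdge n j ↔ i = j := by
  constructor
  · intro h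
    simp only [baseEdge, Sym2.eq_iff, Prod.ext_iff] at h
    rcases h with ⟨⟨h1, _⟩, _⟩ | ⟨⟨h1, _⟩, ⟨h2, _⟩⟩
    · exact h1
    · exact absurd (by linear_combination h2 - h1) (zmod_two_ne_zero hn)
  · rintro rfl; rfl

lemma top_eq_iff (hn : 4 ≤ n) {i j : ZMod n} : topEdge n i = topEdge n j ↔ i = j := by
  constructor
  · intro h
    simp only [topEdge, Sym2.eq_iff, Prod.ext_iff] at h
    rcases h with ⟨⟨h1, _⟩, _⟩ | ⟨⟨h1, _⟩, ⟨h2, _⟩⟩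
    · exact h1
    · exact absurd (by linear_combination h2 - h1) (zmod_two_ne_zero hn)
  · rintro rfl; rfl

lemma pillar_eq_iff {i j : ZMod n} : pillar n i = pillar n j ↔ i = j := by
  constructor
  · intro h
    simp only [pillar, Sym2.eq_iff, Prod.ext_iff] at h
    rcases h with ⟨⟨h1, _⟩, _⟩ | ⟨⟨_, h⟩, _⟩
    · exact h1
    · simp at h
  · rintro rfl; rfl

/-- Every edge of the prism is a pillar, a base edge or a top edge. -/
lemma edge_classify {e : Sym2 (PV n)} (he : e ∈ (prismG n).edgeSet) :
    (∃ i, e = pillar n i) ∨ (∃ i, e = baseEdge n i) ∨ (∃ i, e = topEdge n i) := by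
  induction e using Sym2.ind with
  | _ u v =>
    rw [SimpleGraph.mem_edgeSet, prism_adj] at he
    obtain ⟨i, β⟩ := u
    obtain ⟨j, γ⟩ := v
    obtain ⟨hne, h⟩ := he
    rcases h with (⟨h1, h2⟩ | ⟨h1, h2⟩) | (⟨h1, h2⟩ | ⟨h1, h2⟩) <;> dsimp only at h1 h2
    · subst h1
      cases β <;> cases γ <;> simp only [ne_eq, not_true_eq_false, not_false_eq_true] at h2 ⊢
      · exact Or.inl ⟨i, rfl⟩
      · exact Or.inl ⟨i, Sym2.eq_swap⟩
    · subst h1; subst h2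
      cases β
      · exact Or.inr (Or.inl ⟨i, rfl⟩)
      · exact Or.inr (Or.inr ⟨i, rfl⟩)
    · subst h1
      cases β <;> cases γ <;> simp only [ne_eq, not_true_eq_false, not_false_eq_true] at h2 ⊢
      · exact Or.inl ⟨j, rfl⟩
      · exact Or.inl ⟨j, Sym2.eq_swap⟩
    · subst h1; subst h2
      cases γ
      · exact Or.inr (Or.inl ⟨j, Sym2.eq_swap⟩)
      · exact Or.inr (Or.inr ⟨j, Sym2.eq_swap⟩)

end Aux
section Deg

open SimpleGraph.Walk

variable {V : Type*} [DecidableEq V] {G : SimpleGraph V} {x : V}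

lemma countP_edges_eq_zero {u v : V} (p : G.Walk u v) (hx : x ∉ p.support) :
    p.edges.countP (fun e => decide (x ∈ e)) = 0 := by
  rw [List.countP_eq_zero]
  intro e he
  simp only [decide_eq_true_eq]
  intro hxe
  induction e using Sym2.ind with
  | _ a b =>
    rcases Sym2.mem_iff.mp hxe with rfl | rfl
    · exact hx (p.fst_mem_support_of_mem_edges he)
    · exact hx (p.snd_mem_support_of_mem_edges he)

lemma countP_edges_start_le_one {u v : V} (p : G.Walk u v) (h : p.support.Nodup) :
    p.edges.countP (fun e => decide (u ∈ e)) ≤ 1 := by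
  cases p with
  | nil => simp
  | cons hadj q =>
    rw [Walk.edges_cons, List.countP_cons]
    have hnodup : u ∉ q.support := by
      rw [Walk.support_cons] at h
      exact (List.nodup_cons.mp h).1
    rw [countP_edges_eq_zero q hnodup]
    simp

lemma countP_edges_le_two {a : V} {C : G.Walk a a} (hC : C.IsCycle) (x : V) :
    C.edges.countP (fun e => decide (x ∈ e)) ≤ 2 := by
  by_cases hx : x ∈ C.support
  · have hrot := (Walk.rotate_edges C x hx).perm
    rw [← hrot.countP_eq]
    have hC' : (C.rotate x hx).IsCycle := hC.rotate hx
    generalize hCC : C.rotate x hx = C' at *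
    cases C' with
    | nil => exact absurd rfl hC'.ne_nil
    | @cons _ w _ hadj q =>
      rw [Walk.edges_cons, List.countP_cons]
      have hq : q.support.Nodup := by
        have := hC'.support_nodup
        rwa [Walk.support_cons, List.tail_cons] at this
      have : q.edges.countP (fun e => decide (x ∈ e)) ≤ 1 := by
        have hperm : q.reverse.edges.Perm q.edges := by
          rw [Walk.edges_reverse]; exact List.reverse_perm _
        rw [← hperm.countP_eq]
        apply countP_edges_start_le_one
        rw [Walk.support_reverse]
        exact List.nodup_reverse.mpr hq
      rw [if_pos (by simp : (fun e => decide (x ∈ e)) s(x, w) = true)]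
      omega
  · rw [countP_edges_eq_zero C hx]; omega

lemma two_le_countP_edges {a : V} {C : G.Walk a a} (hC : C.IsCycle) {x : V}
    (hx : x ∈ C.support) :
    2 ≤ C.edges.countP (fun e => decide (x ∈ e)) := by
  have hrot := (Walk.rotate_edges C x hx).perm
  rw [← hrot.countP_eq]
  have hC' : (C.rotate x hx).IsCycle := hC.rotate hx
  generalize hCC : C.rotate x hx = C' at *
  cases C' with
  | nil => exact absurd rfl hC'.ne_nil
  | @cons _ w _ hadj q =>
    -- q : Walk w x, q ≠ nil since x ≠ w
    have hqn : ¬ q.Nil := by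
      intro hnil
      exact hadj.ne (hnil.eq.symm) |>.elim
    obtain ⟨y, hadj', q', hq'⟩ : ∃ (y : V) (h : G.Adj x y) (q' : G.Walk y w), q.reverse = Walk.cons h q' := by
      have : ¬ q.reverse.Nil := by
        rw [Walk.not_nil_iff_lt_length, Walk.length_reverse]
        exact Walk.not_nil_iff_lt_length.mp hqn
      exact Walk.not_nil_iff.mp this
    have hmem : s(x, y) ∈ q.edges := by
      have : s(x, y) ∈ q.reverse.edges := by rw [hq']; simp
      rwa [Walk.edges_reverse, List.mem_reverse] at this
    have hne : s(x, w) ≠ s(x, y) := by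
      intro heq
      have : s(x, w) ∈ q.edges := heq ▸ hmem
      have hnodup := hC'.edges_nodup
      rw [Walk.edges_cons] at hnodup
      exact (List.nodup_cons.mp hnodup).1 this
    rw [Walk.edges_cons, List.countP_cons]
    have : 1 ≤ q.edges.countP (fun e => decide (x ∈ e)) := by
      rw [List.countP_eq_length_filter]
      have : s(x, y) ∈ q.edges.filter (fun e => decide (x ∈ e)) := by
        rw [List.mem_filter]
        exact ⟨hmem, by simp⟩
      exact List.length_pos_iff.mpr (List.ne_nil_of_mem this)
    rw [if_pos (by simp : (fun e => decide (x ∈ e)) s(x, w) = true)]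
    omega

end Deg
section Analysis

variable {n : ℕ} {v : PV n} {C : (prismG n).Walk v v}

lemma exact_two (hC : C.IsHamiltonianCycle) (x : PV n) :
    C.edges.countP (fun e => decide (x ∈ e)) = 2 :=
  le_antisymm (countP_edges_le_two hC.isCycle x)
    (two_le_countP_edges hC.isCycle (hC.mem_support x))

lemma not_three (hC : C.IsHamiltonianCycle) {x : PV n} {e f g : Sym2 (PV n)}
    (he : e ∈ C.edges) (hf : f ∈ C.edges) (hg : g ∈ C.edges)
    (hef : e ≠ f) (heg : e ≠ g) (hfg : f ≠ g)
    (hxe : x ∈ e) (hxf : x ∈ f) (hxg : x ∈ g) : False := by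
  have h2 := exact_two hC x
  rw [List.countP_eq_length_filter] at h2
  set l := C.edges.filter (fun e => decide (x ∈ e)) with hl
  have hme : e ∈ l := List.mem_filter.mpr ⟨he, by simp [hxe]⟩
  have hmf : f ∈ l := List.mem_filter.mpr ⟨hf, by simp [hxf]⟩
  have hmg : g ∈ l := List.mem_filter.mpr ⟨hg, by simp [hxg]⟩
  have hsub : ({e, f, g} : Finset (Sym2 (PV n))) ⊆ l.toFinset := by
    intro y hy
    simp only [Finset.mem_insert, Finset.mem_singleton] at hy
    rcases hy with rfl | rfl | rfl <;> simpa using ‹_ ∈ l›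
  have hcard : ({e, f, g} : Finset (Sym2 (PV n))).card = 3 := by
    rw [Finset.card_insert_of_notMem (by simp [hef, heg]),
      Finset.card_insert_of_notMem (by simp [hfg]), Finset.card_singleton]
  have := Finset.card_le_card hsub
  have := l.toFinset_card_le
  omega

/-- Any prism edge through `(j, false)` is `pillar j`, `baseEdge j` or `baseEdge (j-1)`. -/
lemma inc_false {e : Sym2 (PV n)} {j : ZMod n} (he : e ∈ (prismG n).edgeSet)
    (hx : ((j, false) : PV n) ∈ e) :
    e = pillar n j ∨ e = baseEdge n j ∨ e = baseEdge n (j - 1) := by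
  rcases edge_classify he with ⟨i, rfl⟩ | ⟨i, rfl⟩ | ⟨i, rfl⟩
  · simp only [pillar, Sym2.mem_iff, Prod.mk.injEq] at hx
    rcases hx with ⟨rfl, -⟩ | ⟨-, h⟩
    · exact Or.inl rfl
    · exact absurd h (by simp)
  · simp only [baseEdge, Sym2.mem_iff, Prod.mk.injEq] at hx
    rcases hx with ⟨rfl, -⟩ | ⟨h, -⟩
    · exact Or.inr (Or.inl rfl)
    · refine Or.inr (Or.inr ?_)
      have : i = j - 1 := by rw [h]; ring
      rw [this]
  · simp only [topEdge, Sym2.mem_iff, Prod.mk.injEq] at hx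
    rcases hx with ⟨-, h⟩ | ⟨-, h⟩ <;> exact absurd h (by simp)

lemma inc_true {e : Sym2 (PV n)} {j : ZMod n} (he : e ∈ (prismG n).edgeSet)
    (hx : ((j, true) : PV n) ∈ e) :
    e = pillar n j ∨ e = topEdge n j ∨ e = topEdge n (j - 1) := by
  rcases edge_classify he with ⟨i, rfl⟩ | ⟨i, rfl⟩ | ⟨i, rfl⟩
  · simp only [pillar, Sym2.mem_iff, Prod.mk.injEq] at hx
    rcases hx with ⟨-, h⟩ | ⟨rfl, -⟩
    · exact absurd h (by simp)
    · exact Or.inl rfl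
  · simp only [baseEdge, Sym2.mem_iff, Prod.mk.injEq] at hx
    rcases hx with ⟨-, h⟩ | ⟨-, h⟩ <;> exact absurd h (by simp)
  · simp only [topEdge, Sym2.mem_iff, Prod.mk.injEq] at hx
    rcases hx with ⟨rfl, -⟩ | ⟨h, -⟩
    · exact Or.inr (Or.inl rfl)
    · refine Or.inr (Or.inr ?_)
      have : i = j - 1 := by rw [h]; ring
      rw [this]


lemma mem_base_self {j : ZMod n} : ((j, false) : PV n) ∈ baseEdge n j := by
  simp [baseEdge, Sym2.mem_iff]

lemma mem_base_prev {j : ZMod n} : ((j, false) : PV n) ∈ baseEdge n (j - 1) := by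
  have : j - 1 + 1 = j := by ring
  simp [baseEdge, Sym2.mem_iff, this]

lemma mem_top_self {j : ZMod n} : ((j, true) : PV n) ∈ topEdge n j := by
  simp [topEdge, Sym2.mem_iff]

lemma mem_top_prev {j : ZMod n} : ((j, true) : PV n) ∈ topEdge n (j - 1) := by
  have : j - 1 + 1 = j := by ring
  simp [topEdge, Sym2.mem_iff, this]

lemma mem_pillar_false {j : ZMod n} : ((j, false) : PV n) ∈ pillar n j := by
  simp [pillar, Sym2.mem_iff]

lemma mem_pillar_true {j : ZMod n} : ((j, true) : PV n) ∈ pillar n j := by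
  simp [pillar, Sym2.mem_iff]

lemma base_self_ne_prev (hn : 4 ≤ n) {j : ZMod n} : baseEdge n j ≠ baseEdge n (j - 1) := by
  rw [Ne, base_eq_iff hn]
  intro h
  exact zmod_one_ne_zero hn (by linear_combination h)

lemma top_self_ne_prev (hn : 4 ≤ n) {j : ZMod n} : topEdge n j ≠ topEdge n (j - 1) := by
  rw [Ne, top_eq_iff hn]
  intro h
  exact zmod_one_ne_zero hn (by linear_combination h)

lemma base_alt (hn : 4 ≤ n) (hC : C.IsHamiltonianCycle)
    (hpil : ∀ i, pillar n i ∈ C.edges) :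
    ∀ j : ZMod n, baseEdge n j ∈ C.edges ↔ baseEdge n (j - 1) ∉ C.edges := by
  intro j
  constructor
  · intro hj hj'
    exact not_three hC (hpil j) hj hj' pillar_ne_base pillar_ne_base (base_self_ne_prev hn)
      mem_pillar_false mem_base_self mem_base_prev
  · intro hj'
    by_contra hj
    have h2 := exact_two hC ((j, false) : PV n)
    rw [List.countP_eq_length_filter] at h2
    set l := C.edges.filter (fun e => decide (((j, false) : PV n) ∈ e)) with hl
    have hall : ∀ e ∈ l, e = pillar n j := by
      intro e hel
      rw [hl, List.mem_filter] at hel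
      obtain ⟨he, hxe⟩ := hel
      simp only [decide_eq_true_eq] at hxe
      rcases inc_false (C.edges_subset_edgeSet he) hxe with h | h | h
      · exact h
      · exact absurd (h ▸ he) hj
      · exact absurd (h ▸ he) hj'
    have hnd : l.Nodup := (hC.isCycle.edges_nodup).filter _
    obtain ⟨a, b, hab'⟩ := List.length_eq_two.mp h2
    rw [hab'] at hnd
    have hab : a ≠ b := by simpa using hnd
    rw [hall a (by rw [hab']; simp), hall b (by rw [hab']; simp)] at hab
    exact hab rfl

lemma top_alt (hn : 4 ≤ n) (hC : C.IsHamiltonianCycle)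
    (hpil : ∀ i, pillar n i ∈ C.edges) :
    ∀ j : ZMod n, topEdge n j ∈ C.edges ↔ topEdge n (j - 1) ∉ C.edges := by
  intro j
  constructor
  · intro hj hj'
    exact not_three hC (hpil j) hj hj' pillar_ne_top pillar_ne_top (top_self_ne_prev hn)
      mem_pillar_true mem_top_self mem_top_prev
  · intro hj'
    by_contra hj
    have h2 := exact_two hC ((j, true) : PV n)
    rw [List.countP_eq_length_filter] at h2
    set l := C.edges.filter (fun e => decide (((j, true) : PV n) ∈ e)) with hl
    have hall : ∀ e ∈ l, e = pillar n j := by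
      intro e hel
      rw [hl, List.mem_filter] at hel
      obtain ⟨he, hxe⟩ := hel
      simp only [decide_eq_true_eq] at hxe
      rcases inc_true (C.edges_subset_edgeSet he) hxe with h | h | h
      · exact h
      · exact absurd (h ▸ he) hj
      · exact absurd (h ▸ he) hj'
    have hnd : l.Nodup := (hC.isCycle.edges_nodup).filter _
    obtain ⟨a, b, hab'⟩ := List.length_eq_two.mp h2
    rw [hab'] at hnd
    have hab : a ≠ b := by simpa using hnd
    rw [hall a (by rw [hab']; simp), hall b (by rw [hab']; simp)] at hab
    exact hab rfl

end Analysis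
section Char

variable {n : ℕ} {v : PV n} {C : (prismG n).Walk v v}

lemma other_endpoint₁ {α : Type*} {x y c d : α} (h : s(x, y) = s(c, d)) (hxc : x = c)
    (hxd : x ≠ d) : y = d := by
  rw [Sym2.eq_iff] at h
  rcases h with ⟨-, h2⟩ | ⟨h1, -⟩
  · exact h2
  · exact absurd h1 hxd

lemma other_endpoint₂ {α : Type*} {x y c d : α} (h : s(x, y) = s(c, d)) (hxd : x = d)
    (hxc : x ≠ c) : y = c := by
  rw [Sym2.eq_iff] at h
  rcases h with ⟨h1, -⟩ | ⟨-, h2⟩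
  · exact absurd h1 hxc
  · exact h2

lemma base_parity (hn : 4 ≤ n) (hC : C.IsHamiltonianCycle)
    (hpil : ∀ i, pillar n i ∈ C.edges) :
    ∀ k : ℕ, (baseEdge n (k : ZMod n) ∈ C.edges ↔ (Even k ↔ baseEdge n 0 ∈ C.edges)) := by
  intro k
  induction k with
  | zero => simp
  | succ k ih =>
    have halt := base_alt hn hC hpil ((k + 1 : ℕ) : ZMod n)
    have hc : ((k + 1 : ℕ) : ZMod n) - 1 = (k : ZMod n) := by push_cast; ring
    rw [hc] at halt
    rw [halt, ih, Nat.even_add_one]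
    tauto

lemma top_parity (hn : 4 ≤ n) (hC : C.IsHamiltonianCycle)
    (hpil : ∀ i, pillar n i ∈ C.edges) :
    ∀ k : ℕ, (topEdge n (k : ZMod n) ∈ C.edges ↔ (Even k ↔ topEdge n 0 ∈ C.edges)) := by
  intro k
  induction k with
  | zero => simp
  | succ k ih =>
    have halt := top_alt hn hC hpil ((k + 1 : ℕ) : ZMod n)
    have hc : ((k + 1 : ℕ) : ZMod n) - 1 = (k : ZMod n) := by push_cast; ring
    rw [hc] at halt
    rw [halt, ih, Nat.even_add_one]
    tauto

lemma base_char (hn : 4 ≤ n) (hC : C.IsHamiltonianCycle)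
    (hpil : ∀ i, pillar n i ∈ C.edges) (i : ZMod n) :
    baseEdge n i ∈ C.edges ↔ (Even i.val ↔ baseEdge n 0 ∈ C.edges) := by
  haveI : NeZero n := ⟨by omega⟩
  have := base_parity hn hC hpil i.val
  rwa [ZMod.natCast_val, ZMod.cast_id] at this

lemma top_char (hn : 4 ≤ n) (hC : C.IsHamiltonianCycle)
    (hpil : ∀ i, pillar n i ∈ C.edges) (i : ZMod n) :
    topEdge n i ∈ C.edges ↔ (Even i.val ↔ topEdge n 0 ∈ C.edges) := by
  haveI : NeZero n := ⟨by omega⟩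
  have := top_parity hn hC hpil i.val
  rwa [ZMod.natCast_val, ZMod.cast_id] at this

/-- If both the base and the top edge at position `j` were used, the cycle would be trapped
in a 4-vertex set, contradicting hamiltonicity. -/
lemma not_both_bt (hn : 4 ≤ n) (hC : C.IsHamiltonianCycle)
    (hpil : ∀ i, pillar n i ∈ C.edges) {j : ZMod n}
    (hb : baseEdge n j ∈ C.edges) (ht : topEdge n j ∈ C.edges) : False := by
  have hbm : baseEdge n (j - 1) ∉ C.edges := (base_alt hn hC hpil j).mp hb
  have htm : topEdge n (j - 1) ∉ C.edges := (top_alt hn hC hpil j).mp ht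
  have hb1 : baseEdge n (j + 1) ∉ C.edges := fun h =>
    ((base_alt hn hC hpil (j + 1)).mp h) (by rwa [show j + 1 - 1 = j by ring])
  have ht1 : topEdge n (j + 1) ∉ C.edges := fun h =>
    ((top_alt hn hC hpil (j + 1)).mp h) (by rwa [show j + 1 - 1 = j by ring])
  set S4 : Set (PV n) :=
    {((j, false) : PV n), (j, true), (j + 1, false), (j + 1, true)} with hS4
  have hne1 : ((j : ZMod n), false) ≠ (((j : ZMod n) + 1), false) := by
    intro h
    exact zmod_one_ne_zero hn (by linear_combination ((Prod.ext_iff.mp h).1).symm)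
  have hne1t : ((j : ZMod n), true) ≠ (((j : ZMod n) + 1), true) := by
    intro h
    exact zmod_one_ne_zero hn (by linear_combination ((Prod.ext_iff.mp h).1).symm)
  have hclosed : ∀ x y : PV n, s(x, y) ∈ C.edges → x ∈ S4 → y ∈ S4 := by
    intro x y he hx
    have hedge := C.edges_subset_edgeSet he
    simp only [hS4, Set.mem_insert_iff, Set.mem_singleton_iff] at hx ⊢
    rcases hx with rfl | rfl | rfl | rfl
    · rcases inc_false hedge (by exact Sym2.mem_mk_left _ _) with h | h | h
      · exact Or.inr (Or.inl (other_endpoint₁ h rfl (by simp)))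
      · exact Or.inr (Or.inr (Or.inl (other_endpoint₁ h rfl hne1)))
      · exact absurd (h ▸ he) hbm
    · rcases inc_true hedge (by exact Sym2.mem_mk_left _ _) with h | h | h
      · exact Or.inl (other_endpoint₂ h rfl (by simp))
      · exact Or.inr (Or.inr (Or.inr (other_endpoint₁ h rfl hne1t)))
      · exact absurd (h ▸ he) htm
    · rcases inc_false hedge (by exact Sym2.mem_mk_left _ _) with h | h | h
      · refine Or.inr (Or.inr (Or.inr (other_endpoint₁ h rfl (by simp))))
      · exact absurd (h ▸ he) hb1
      · rw [show j + 1 - 1 = j by ring] at h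
        exact Or.inl (other_endpoint₂ h rfl hne1.symm)
    · rcases inc_true hedge (by exact Sym2.mem_mk_left _ _) with h | h | h
      · exact Or.inr (Or.inr (Or.inl (other_endpoint₂ h rfl (by simp))))
      · exact absurd (h ▸ he) ht1
      · rw [show j + 1 - 1 = j by ring] at h
        exact Or.inr (Or.inl (other_endpoint₂ h rfl hne1t.symm))
  have hconn := C.toSubgraph_connected
  have hv1 : ((j, false) : PV n) ∈ C.toSubgraph.verts := by
    rw [SimpleGraph.Walk.mem_verts_toSubgraph]; exact hC.mem_support _
  have hv2 : ((j + 2, false) : PV n) ∈ C.toSubgraph.verts := by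
    rw [SimpleGraph.Walk.mem_verts_toSubgraph]; exact hC.mem_support _
  obtain ⟨w⟩ := hconn.preconnected ⟨_, hv1⟩ ⟨_, hv2⟩
  have key : ∀ (a b : C.toSubgraph.verts) (w : (C.toSubgraph.coe).Walk a b),
      a.val ∈ S4 → b.val ∈ S4 := by
    intro a b w
    induction w with
    | nil => exact id
    | @cons a c b hadj p ih =>
      intro ha
      apply ih
      have : s(a.val, c.val) ∈ C.edges := by
        rw [← SimpleGraph.Walk.mem_edges_toSubgraph]
        exact (SimpleGraph.Subgraph.mem_edgeSet).mpr
          (by rwa [SimpleGraph.Subgraph.coe_adj] at hadj)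
      exact hclosed _ _ this ha
  have hfin : ((j + 2 : ZMod n), false) ∈ S4 := key _ _ w (by simp [hS4])
  simp only [hS4, Set.mem_insert_iff, Set.mem_singleton_iff, Prod.ext_iff] at hfin
  rcases hfin with ⟨h, -⟩ | ⟨-, h⟩ | ⟨h, -⟩ | ⟨-, h⟩
  · exact zmod_two_ne_zero hn (by linear_combination h)
  · simp at h
  · exact zmod_one_ne_zero hn (by linear_combination h)
  · simp at h

lemma top_iff_not_base (hn : 4 ≤ n) (hC : C.IsHamiltonianCycle)
    (hpil : ∀ i, pillar n i ∈ C.edges) :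
    ∀ i : ZMod n, topEdge n i ∈ C.edges ↔ baseEdge n i ∉ C.edges := by
  haveI : Fact (1 < n) := ⟨by omega⟩
  intro i
  by_cases h0 : (topEdge n 0 ∈ C.edges ↔ baseEdge n 0 ∈ C.edges)
  · exfalso
    by_cases hb0 : baseEdge n 0 ∈ C.edges
    · exact not_both_bt hn hC hpil hb0 (h0.mpr hb0)
    · have hb1 : baseEdge n 1 ∈ C.edges := by
        rw [base_char hn hC hpil 1, ZMod.val_one]
        simp [Nat.even_iff, hb0]
      have ht1 : topEdge n 1 ∈ C.edges := by
        rw [top_char hn hC hpil 1, ZMod.val_one]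
        have ht0 : topEdge n 0 ∉ C.edges := fun h => hb0 (h0.mp h)
        simp [Nat.even_iff, ht0]
      exact not_both_bt hn hC hpil hb1 ht1
  · rw [top_char hn hC hpil i, base_char hn hC hpil i]
    tauto

/-- The candidate edge set, as a function of the proposition
"the base edge at 0 is used". -/
def Echar (n : ℕ) (p : Prop) : Set (Sym2 (PV n)) :=
  {e | (∃ i, e = pillar n i) ∨ (∃ i : ZMod n, e = baseEdge n i ∧ (Even i.val ↔ p)) ∨
    (∃ i : ZMod n, e = topEdge n i ∧ ¬(Even i.val ↔ p))}

lemma edges_char (hn : 4 ≤ n) (hC : C.IsHamiltonianCycle)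
    (hpil : ∀ i, pillar n i ∈ C.edges) :
    {e | e ∈ C.edges} = Echar n (baseEdge n 0 ∈ C.edges) := by
  ext e
  simp only [Set.mem_setOf_eq, Echar]
  constructor
  · intro he
    rcases edge_classify (C.edges_subset_edgeSet he) with ⟨i, rfl⟩ | ⟨i, rfl⟩ | ⟨i, rfl⟩
    · exact Or.inl ⟨i, rfl⟩
    · exact Or.inr (Or.inl ⟨i, rfl, (base_char hn hC hpil i).mp he⟩)
    · refine Or.inr (Or.inr ⟨i, rfl, ?_⟩)
      have h1 := (top_iff_not_base hn hC hpil i).mp he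
      rwa [base_char hn hC hpil i] at h1
  · rintro (⟨i, rfl⟩ | ⟨i, rfl, hp⟩ | ⟨i, rfl, hp⟩)
    · exact hpil i
    · exact (base_char hn hC hpil i).mpr hp
    · apply (top_iff_not_base hn hC hpil i).mpr
      rw [base_char hn hC hpil i]
      exact hp

end Char
section Meander

variable {n : ℕ} {v : PV n} {C : (prismG n).Walk v v}

lemma meander_of_pillars (hC : C.IsHamiltonianCycle)
    (hpil : ∀ i, pillar n i ∈ C.edges) : Meandering C := by
  rintro e he f hf hef hbt ⟨x, hxe, hxf⟩
  obtain ⟨m, β⟩ := x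
  rcases hbt with ⟨⟨i, rfl⟩, ⟨i', rfl⟩⟩ | ⟨⟨i, rfl⟩, ⟨i', rfl⟩⟩
  · have hβ : β = false := by
      simp only [baseEdge, Sym2.mem_iff, Prod.mk.injEq] at hxe
      tauto
    subst hβ
    exact not_three hC (hpil m) he hf pillar_ne_base pillar_ne_base hef
      mem_pillar_false hxe hxf
  · have hβ : β = true := by
      simp only [topEdge, Sym2.mem_iff, Prod.mk.injEq] at hxe
      tauto
    subst hβ
    exact not_three hC (hpil m) he hf pillar_ne_top pillar_ne_top hef
      mem_pillar_true hxe hxf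

end Meander

section Construction

/-- The `j`-th vertex of the zigzag hamiltonian cycle (shifted by `c`). -/
def fV (n : ℕ) (c : ZMod n) (j : ℕ) : PV n :=
  (((j / 2 : ℕ) : ZMod n) + c, decide (j % 4 = 1 ∨ j % 4 = 2))

variable {n : ℕ}

lemma fV_even (c : ZMod n) {j k : ℕ} (h : j = 2 * k) :
    fV n c j = (((k : ℕ) : ZMod n) + c, decide (k % 2 = 1)) := by
  subst h
  unfold fV
  have hd : 2 * k / 2 = k := by omega
  rw [hd]
  congr 1
  exact decide_eq_decide.mpr (by omega)

lemma fV_odd (c : ZMod n) {j k : ℕ} (h : j = 2 * k + 1) :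
    fV n c j = (((k : ℕ) : ZMod n) + c, decide (k % 2 = 0)) := by
  subst h
  unfold fV
  have hd : (2 * k + 1) / 2 = k := by omega
  rw [hd]
  congr 1
  exact decide_eq_decide.mpr (by omega)

lemma fV_adj (hn : 4 ≤ n) (c : ZMod n) (j : ℕ) :
    (prismG n).Adj (fV n c j) (fV n c (j + 1)) := by
  rw [prism_adj]
  rcases Nat.even_or_odd j with ⟨k, hk⟩ | ⟨k, hk⟩
  · rw [fV_even c (by omega : j = 2 * k), fV_odd c (by omega : j + 1 = 2 * k + 1)]
    have hb : (decide (k % 2 = 1)) ≠ (decide (k % 2 = 0)) := by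
      by_cases h : k % 2 = 0
      · simp [h]
      · have h' : k % 2 = 1 := by omega
        simp [h', (by omega : ¬ (1 = 0))]
    exact ⟨by simp [Prod.ext_iff, hb], Or.inl (Or.inl ⟨rfl, hb⟩)⟩
  · rw [fV_odd c (by omega : j = 2 * k + 1), fV_even c (by omega : j + 1 = 2 * (k + 1))]
    have hb : (decide (k % 2 = 0)) = (decide ((k + 1) % 2 = 1)) :=
      decide_eq_decide.mpr (by omega)
    have hfst : (((k + 1 : ℕ) : ZMod n) + c) = (((k : ℕ) : ZMod n) + c) + 1 := by
      push_cast; ring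
    refine ⟨?_, Or.inl (Or.inr ⟨by simpa using hb, by simpa using hfst⟩)⟩
    intro h
    have h1 := (Prod.ext_iff.mp h).1
    rw [hfst] at h1
    exact zmod_one_ne_zero hn (by linear_combination h1.symm)

lemma fV_inj (hn : 4 ≤ n) (c : ZMod n) {j j' : ℕ} (hj : j < 2 * n) (hj' : j' < 2 * n)
    (h : fV n c j = fV n c j') : j = j' := by
  have h1 := (Prod.ext_iff.mp h).1
  have h2 := (Prod.ext_iff.mp h).2
  simp only [fV] at h1 h2
  have hdiv : j / 2 = j' / 2 :=
    zmod_cast_inj hn (by omega) (by omega) (by linear_combination h1)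
  have hmod := decide_eq_decide.mp h2
  omega

lemma fV_wrap (heven : Even n) (c : ZMod n) : fV n c (2 * n) = fV n c 0 := by
  obtain ⟨m, hm⟩ := heven
  unfold fV
  congr 1
  · simp [Nat.mul_div_cancel_left, ZMod.natCast_self]
  · exact decide_eq_decide.mpr (by omega)

lemma fV_surj (hn : 4 ≤ n) (c : ZMod n) (x : PV n) : ∃ j < 2 * n, fV n c j = x := by
  haveI : NeZero n := ⟨by omega⟩
  obtain ⟨i, β⟩ := x
  set k := (i - c).val with hk
  have hkn : k < n := ZMod.val_lt _
  have hfst : ((k : ℕ) : ZMod n) + c = i := by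
    rw [hk, ZMod.natCast_val, ZMod.cast_id]; ring
  by_cases h2 : k % 2 = 0
  · cases β
    · exact ⟨2 * k, by omega, by rw [fV_even c rfl, hfst]; simp [h2, (by omega : ¬ (0 = 1))]⟩
    · exact ⟨2 * k + 1, by omega, by rw [fV_odd c rfl, hfst]; simp [h2]⟩
  · have h2' : k % 2 = 1 := by omega
    cases β
    · exact ⟨2 * k + 1, by omega, by rw [fV_odd c rfl, hfst]; simp [h2', (by omega : ¬ (1 = 0))]⟩
    · exact ⟨2 * k, by omega, by rw [fV_even c rfl, hfst]; simp [h2']⟩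

/-- The zigzag walk up to step `m`. -/
def fW (hn : 4 ≤ n) (c : ZMod n) : (m : ℕ) → (prismG n).Walk (fV n c 0) (fV n c m)
  | 0 => SimpleGraph.Walk.nil
  | m + 1 => (fW hn c m).concat (fV_adj hn c m)

lemma fW_support (hn : 4 ≤ n) (c : ZMod n) (m : ℕ) :
    (fW hn c m).support = (List.range (m + 1)).map (fV n c) := by
  induction m with
  | zero => simp [fW, List.range_succ]
  | succ m ih =>
    rw [fW, SimpleGraph.Walk.support_concat, ih, List.range_succ (n := m + 1)]
    simp

lemma fW_edges (hn : 4 ≤ n) (c : ZMod n) (m : ℕ) :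
    (fW hn c m).edges = (List.range m).map (fun j => s(fV n c j, fV n c (j + 1))) := by
  induction m with
  | zero => simp [fW]
  | succ m ih =>
    rw [fW, SimpleGraph.Walk.edges_concat, ih, List.range_succ (n := m)]
    simp

/-- The zigzag hamiltonian cycle. -/
def zigzag (hn : 4 ≤ n) (heven : Even n) (c : ZMod n) :
    (prismG n).Walk (fV n c 0) (fV n c 0) :=
  (fW hn c (2 * n)).copy rfl (fV_wrap heven c)

lemma zigzag_edges (hn : 4 ≤ n) (heven : Even n) (c : ZMod n) :
    (zigzag hn heven c).edges
      = (List.range (2 * n)).map (fun j => s(fV n c j, fV n c (j + 1))) := by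
  rw [zigzag, SimpleGraph.Walk.edges_copy, fW_edges]

lemma zigzag_support (hn : 4 ≤ n) (heven : Even n) (c : ZMod n) :
    (zigzag hn heven c).support = (List.range (2 * n + 1)).map (fV n c) := by
  rw [zigzag, SimpleGraph.Walk.support_copy, fW_support]

lemma zigzag_support_tail (hn : 4 ≤ n) (heven : Even n) (c : ZMod n) :
    (zigzag hn heven c).support.tail
      = (List.range (2 * n)).map (fun j => fV n c (j + 1)) := by
  rw [zigzag_support, List.range_succ_eq_map]
  simp [Function.comp]

lemma fV_inj' (hn : 4 ≤ n) (heven : Even n) (c : ZMod n) {a b : ℕ}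
    (ha1 : 1 ≤ a) (ha2 : a ≤ 2 * n) (hb1 : 1 ≤ b) (hb2 : b ≤ 2 * n)
    (h : fV n c a = fV n c b) : a = b := by
  rcases eq_or_lt_of_le ha2 with rfl | ha2
  · rcases eq_or_lt_of_le hb2 with rfl | hb2
    · rfl
    · rw [fV_wrap heven c] at h
      have := fV_inj hn c (by omega) hb2 h
      omega
  · rcases eq_or_lt_of_le hb2 with rfl | hb2
    · rw [fV_wrap heven c] at h
      have := fV_inj hn c ha2 (by omega) h
      omega
    · exact fV_inj hn c ha2 hb2 h

lemma zigzag_tail_nodup (hn : 4 ≤ n) (heven : Even n) (c : ZMod n) :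
    (zigzag hn heven c).support.tail.Nodup := by
  rw [zigzag_support_tail]
  refine List.Nodup.map_on ?_ List.nodup_range
  intro a ha b hb h
  rw [List.mem_range] at ha hb
  have := fV_inj' hn heven c (by omega) (by omega) (by omega) (by omega) h
  omega

lemma zigzag_edges_nodup (hn : 4 ≤ n) (heven : Even n) (c : ZMod n) :
    (zigzag hn heven c).edges.Nodup := by
  rw [zigzag_edges]
  refine List.Nodup.map_on ?_ List.nodup_range
  intro a ha b hb h
  rw [List.mem_range] at ha hb
  rw [Sym2.eq_iff] at h
  rcases h with ⟨h1, h2⟩ | ⟨h1, h2⟩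
  · exact fV_inj hn c ha hb h1
  · -- crossed case: fV a = fV (b+1), fV (a+1) = fV b
    by_cases ha0 : a = 0
    · subst ha0
      have h1' : fV n c (2 * n) = fV n c (b + 1) := by rw [fV_wrap heven c]; exact h1
      have e1 := fV_inj' hn heven c (by omega) (le_refl _) (by omega) (by omega) h1'
      have e2 := fV_inj' hn heven c (by omega) (by omega) (by omega) (by omega) h2
      omega
    · by_cases hb0 : b = 0
      · subst hb0
        have h2' : fV n c (a + 1) = fV n c (2 * n) := by rw [fV_wrap heven c]; exact h2
        have e2 := fV_inj' hn heven c (by omega) (by omega) (by omega) (le_refl _) h2'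
        have e1 := fV_inj' hn heven c (by omega) (by omega) (by omega) (by omega) h1
        omega
      · have e1 := fV_inj' hn heven c (by omega) (by omega) (by omega) (by omega) h1
        have e2 := fV_inj' hn heven c (by omega) (by omega) (by omega) (by omega) h2
        omega

end Construction
section Final

variable {n : ℕ}

lemma fW_length (hn : 4 ≤ n) (c : ZMod n) (m : ℕ) : (fW hn c m).length = m := by
  induction m with
  | zero => rfl
  | succ m ih => rw [fW, SimpleGraph.Walk.length_concat, ih]

lemma zigzag_ne_nil (hn : 4 ≤ n) (heven : Even n) (c : ZMod n) :
    zigzag hn heven c ≠ SimpleGraph.Walk.nil := by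
  intro h
  have hlen : (zigzag hn heven c).length = 2 * n := by
    rw [zigzag, SimpleGraph.Walk.length_copy, fW_length]
  rw [h] at hlen
  simp only [SimpleGraph.Walk.length_nil] at hlen
  omega

lemma zigzag_isCycle (hn : 4 ≤ n) (heven : Even n) (c : ZMod n) :
    (zigzag hn heven c).IsCycle :=
  ⟨⟨⟨zigzag_edges_nodup hn heven c⟩, zigzag_ne_nil hn heven c⟩,
    zigzag_tail_nodup hn heven c⟩

lemma zigzag_isHamiltonianCycle (hn : 4 ≤ n) (heven : Even n) (c : ZMod n) :
    (zigzag hn heven c).IsHamiltonianCycle := by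
  rw [SimpleGraph.Walk.isHamiltonianCycle_iff_isCycle_and_support_count_tail_eq_one]
  refine ⟨zigzag_isCycle hn heven c, ?_⟩
  intro a
  have hnd := zigzag_tail_nodup hn heven c
  refine @List.count_eq_one_of_mem _ instBEqOfDecidableEq _ a _ hnd ?_
  rw [zigzag_support_tail]
  obtain ⟨j₀, hj₀, hfj⟩ := fV_surj hn c a
  rcases Nat.eq_zero_or_pos j₀ with rfl | hpos
  · refine List.mem_map.mpr ⟨2 * n - 1, List.mem_range.mpr (by omega), ?_⟩
    rw [show 2 * n - 1 + 1 = 2 * n by omega, fV_wrap heven c]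
    exact hfj
  · exact List.mem_map.mpr ⟨j₀ - 1, List.mem_range.mpr (by omega),
      by rw [show j₀ - 1 + 1 = j₀ by omega]; exact hfj⟩

lemma zigzag_pillars (hn : 4 ≤ n) (heven : Even n) (c : ZMod n) :
    ∀ i : ZMod n, pillar n i ∈ (zigzag hn heven c).edges := by
  haveI : NeZero n := ⟨by omega⟩
  intro i
  rw [zigzag_edges]
  set k := (i - c).val with hk
  have hkn : k < n := ZMod.val_lt _
  have hfst : ((k : ℕ) : ZMod n) + c = i := by
    rw [hk, ZMod.natCast_val, ZMod.cast_id]; ring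
  refine List.mem_map.mpr ⟨2 * k, List.mem_range.mpr (by omega), ?_⟩
  rw [fV_even c rfl, fV_odd c (by omega : 2 * k + 1 = 2 * k + 1), hfst]
  by_cases h2 : k % 2 = 0
  · rw [show (decide (k % 2 = 1)) = false by simp [h2, (by omega : ¬ (0 = 1))],
      show (decide (k % 2 = 0)) = true by simp [h2]]
    rfl
  · rw [show (decide (k % 2 = 1)) = true by simp [(by omega : k % 2 = 1)],
      show (decide (k % 2 = 0)) = false by simp [h2]]
    exact Sym2.eq_swap

lemma zigzag_base1 (hn : 4 ≤ n) (heven : Even n) :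
    baseEdge n 1 ∈ (zigzag hn heven 0).edges := by
  rw [zigzag_edges]
  refine List.mem_map.mpr ⟨3, List.mem_range.mpr (by omega), ?_⟩
  rw [fV_odd 0 (by omega : 3 = 2 * 1 + 1), fV_even 0 (by omega : 3 + 1 = 2 * 2)]
  rw [show (decide (1 % 2 = 0)) = false by simp, show (decide (2 % 2 = 1)) = false by simp]
  unfold baseEdge
  congr 2 <;> push_cast <;> ring

lemma zigzag_base2 (hn : 4 ≤ n) (heven : Even n) :
    baseEdge n 2 ∈ (zigzag hn heven 1).edges := by
  rw [zigzag_edges]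
  refine List.mem_map.mpr ⟨3, List.mem_range.mpr (by omega), ?_⟩
  rw [fV_odd 1 (by omega : 3 = 2 * 1 + 1), fV_even 1 (by omega : 3 + 1 = 2 * 2)]
  rw [show (decide (1 % 2 = 0)) = false by simp, show (decide (2 % 2 = 1)) = false by simp]
  unfold baseEdge
  congr 2 <;> push_cast <;> ring

lemma b0_zig0 (hn : 4 ≤ n) (heven : Even n) :
    baseEdge n 0 ∉ (zigzag hn heven 0).edges := by
  haveI : Fact (1 < n) := ⟨by omega⟩
  have h1 := (base_char hn (zigzag_isHamiltonianCycle hn heven 0)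
    (zigzag_pillars hn heven 0) 1).mp (zigzag_base1 hn heven)
  rw [ZMod.val_one] at h1
  intro h0
  exact (by simpa using h1.mpr h0 : False)

lemma b0_zig1 (hn : 4 ≤ n) (heven : Even n) :
    baseEdge n 0 ∈ (zigzag hn heven 1).edges := by
  have h1 := (base_char hn (zigzag_isHamiltonianCycle hn heven 1)
    (zigzag_pillars hn heven 1) 2).mp (zigzag_base2 hn heven)
  have hval : ((2 : ZMod n)).val = 2 := by
    have : ((2 : ℕ) : ZMod n) = (2 : ZMod n) := by push_cast; rfl
    rw [← this, ZMod.val_cast_of_lt (by omega)]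
  rw [hval] at h1
  exact h1.mp (by norm_num)

end Final
/-- If `n ≥ 4` is even, then the prism `C_n □ K_2` has exactly two
hamiltonian cycles (as edge sets) containing all `n` pillars, and both are meandering. -/
theorem stmt3 (n : ℕ) (hn : 4 ≤ n) (heven : Even n) :
    ∃ E₁ E₂ : Set (Sym2 (PV n)), E₁ ≠ E₂ ∧
      (∀ E : Set (Sym2 (PV n)),
        (∃ (v : PV n) (C : (prismG n).Walk v v), C.IsHamiltonianCycle ∧
          (∀ i : ZMod n, pillar n i ∈ C.edges) ∧ E = {e | e ∈ C.edges}) →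
        E = E₁ ∨ E = E₂) ∧
      (∀ E ∈ ({E₁, E₂} : Set (Set (Sym2 (PV n)))),
        ∃ (v : PV n) (C : (prismG n).Walk v v), C.IsHamiltonianCycle ∧
          (∀ i : ZMod n, pillar n i ∈ C.edges) ∧ Meandering C ∧ E = {e | e ∈ C.edges}) := by
  haveI : NeZero n := ⟨by omega⟩
  have hham1 := zigzag_isHamiltonianCycle hn heven 0
  have hham2 := zigzag_isHamiltonianCycle hn heven 1
  have hpil1 := zigzag_pillars hn heven 0
  have hpil2 := zigzag_pillars hn heven 1
  have hchar1 : {e | e ∈ (zigzag hn heven 0).edges} = Echar n False := by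
    rw [edges_char hn hham1 hpil1]
    exact congrArg (Echar n) (propext (iff_false_intro (b0_zig0 hn heven)))
  have hchar2 : {e | e ∈ (zigzag hn heven 1).edges} = Echar n True := by
    rw [edges_char hn hham2 hpil2]
    exact congrArg (Echar n) (propext (iff_true_intro (b0_zig1 hn heven)))
  refine ⟨{e | e ∈ (zigzag hn heven 0).edges}, {e | e ∈ (zigzag hn heven 1).edges},
    ?_, ?_, ?_⟩
  · rw [hchar1, hchar2]
    intro h
    have hmem : baseEdge n 0 ∈ Echar n True := by
      refine Or.inr (Or.inl ⟨0, rfl, ?_⟩)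
      simp [ZMod.val_zero]
    rw [← h] at hmem
    rcases hmem with ⟨i, hi⟩ | ⟨i, hi, hp⟩ | ⟨i, hi, hp⟩
    · exact pillar_ne_base hi.symm
    · rw [base_eq_iff hn] at hi
      rw [← hi] at hp
      simp [ZMod.val_zero] at hp
    · exact base_ne_top hi
  · rintro E ⟨v, C, hC, hpilC, rfl⟩
    rw [edges_char hn hC hpilC, hchar1, hchar2]
    by_cases h0 : baseEdge n 0 ∈ C.edges
    · exact Or.inr (congrArg (Echar n) (propext (iff_true_intro h0)))
    · exact Or.inl (congrArg (Echar n) (propext (iff_false_intro h0)))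
  · intro E hE
    rcases hE with rfl | rfl
    · exact ⟨_, zigzag hn heven 0, hham1, hpil1,
        meander_of_pillars hham1 hpil1, rfl⟩
    · exact ⟨_, zigzag hn heven 1, hham2, hpil2,
        meander_of_pillars hham2 hpil2, rfl⟩
end

section
/- In any graph G obtained from a prism by TF-inflation of a vertex v, every hamiltonian cycle of G must contain the pillar edge incident to the inserted Tutte Fragment (i.e., the edge incident to the vertex c of that fragment). -/
open SimpleGraph

instance : DecidableRel TF.Adj := fun x y =>
  decidable_of_iff (x ≠ y ∧ ((x,y) ∈ TFedges ∨ (y,x) ∈ TFedges))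
    (by rw [TF, SimpleGraph.fromRel_adj])

def nbrs : Fin 15 → List (Fin 15)
  | 0 => [4,14] | 1 => [7,14] | 2 => [6,8] | 3 => [9,10,14]
  | 4 => [0,5,9] | 5 => [4,6,11] | 6 => [5,2,13] | 7 => [1,8,10]
  | 8 => [7,2,13] | 9 => [4,3,11] | 10 => [3,7,12] | 11 => [5,12,9]
  | 12 => [11,13,10] | 13 => [6,8,12] | 14 => [0,1,3]

lemma mem_nbrs : ∀ x y : Fin 15, TF.Adj x y → y ∈ nbrs x := by decide

def srch : ℕ → Fin 15 → List (Fin 15) → Bool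
  | 0, cur, _ => cur == 1
  | (f+1), cur, vis => (nbrs cur).any fun y => !(decide (y ∈ vis)) && srch f y (y :: vis)

lemma srch_complete : ∀ (l : List (Fin 15)) (cur : Fin 15) (vis : List (Fin 15)),
    List.Chain' TF.Adj (cur :: l) → (cur :: l).getLast? = some 1 →
    (∀ x ∈ l, x ∉ vis) → l.Nodup → srch l.length cur vis = true := by
  intro l
  induction l with
  | nil =>
    intro cur vis _ hlast _ _
    simp only [List.getLast?_singleton, Option.some.injEq] at hlast
    simp [srch, hlast]
  | cons y l ih =>
    intro cur vis hch hlast hvis hnd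
    have hadj : TF.Adj cur y := (List.isChain_cons_cons.mp hch).1
    have h1 : srch l.length y (y :: vis) = true := by
      apply ih
      · exact (List.isChain_cons_cons.mp hch).2
      · rwa [List.getLast?_cons_cons] at hlast
      · intro x hx
        simp only [List.mem_cons, not_or]
        exact ⟨fun h => (List.nodup_cons.mp hnd).1 (h ▸ hx), hvis x (List.mem_cons_of_mem _ hx)⟩
      · exact (List.nodup_cons.mp hnd).2
    simp only [List.length_cons, srch, List.any_eq_true]
    exact ⟨y, mem_nbrs _ _ hadj, by simp [hvis y (List.mem_cons_self), h1]⟩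

lemma srch_false : srch 14 0 [0] = false := by decide

lemma noham : ∀ l : List (Fin 15), List.Chain' TF.Adj l → l.Nodup → (∀ k, k ∈ l) →
    l.head? = some 0 → l.getLast? = some 1 → False := by
  intro l hch hnd hcov hhead hlast
  obtain ⟨l', rfl⟩ : ∃ l', l = (0 : Fin 15) :: l' := by
    cases l with
    | nil => simp at hhead
    | cons a l' =>
      simp only [List.head?_cons, Option.some.injEq] at hhead
      exact ⟨l', by rw [hhead]⟩
  have hlen : ((0 : Fin 15) :: l').length = 15 := by
    have h1 : ((0 : Fin 15) :: l').toFinset = Finset.univ :=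
      Finset.eq_univ_iff_forall.mpr (fun k => List.mem_toFinset.mpr (hcov k))
    have h2 := List.toFinset_card_of_nodup hnd
    rw [h1] at h2
    simpa using h2.symm
  have h14 : l'.length = 14 := by simpa using hlen
  have := srch_complete l' 0 [0] hch hlast
    (fun x hx => by
      simp only [List.mem_singleton]
      exact fun h => (List.nodup_cons.mp hnd).1 (h ▸ hx))
    (List.nodup_cons.mp hnd).2
  rw [h14, srch_false] at this
  exact absurd this (by simp)

section Abstract

variable {V : Type*} {A : V → V → Prop} {F : V → Prop} {fv : Fin 15 → V}
  {pk qk : Fin 15} {Pext Qext : V}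

lemma out2 (hF : ∀ k, F (fv k))
    (hcross : ∀ x y, A x y → ¬ F x → F y → (x = Pext ∧ y = fv pk) ∨ (x = Qext ∧ y = fv qk)) :
    ∀ (T : List V) (u : V), List.Chain' A (u :: T) → ¬ F u →
      fv pk ∉ T → fv qk ∉ T → ∀ k, fv k ∉ (u :: T) := by
  intro T
  induction T with
  | nil =>
    intro u _ hu _ _ k hk
    rw [List.mem_singleton] at hk
    exact hu (hk ▸ hF k)
  | cons x T ih =>
    intro u hch hu hp hq k hk
    rcases List.mem_cons.mp hk with rfl | hk'
    · exact hu (hF k)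
    by_cases hx : F x
    · rcases hcross u x (List.isChain_cons_cons.mp hch).1 hu hx with ⟨_, rfl⟩ | ⟨_, rfl⟩
      · exact hp (List.mem_cons_self)
      · exact hq (List.mem_cons_self)
    · exact ih x (List.isChain_cons_cons.mp hch).2 hx
        (fun h => hp (List.mem_cons_of_mem _ h))
        (fun h => hq (List.mem_cons_of_mem _ h)) k hk'

lemma ins (hF : ∀ k, F (fv k)) (hinj : Function.Injective fv)
    (hfv : ∀ x, F x → ∃ k, x = fv k)
    (hsymm : ∀ x y, A x y → A y x)
    (hint : ∀ j k, A (fv j) (fv k) → TF.Adj j k)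
    (hcross : ∀ x y, A x y → ¬ F x → F y → (x = Pext ∧ y = fv pk) ∨ (x = Qext ∧ y = fv qk)) :
    ∀ (T : List V) (k : Fin 15), List.Chain' A (fv k :: T) → (fv k :: T).Nodup →
      Pext ∉ T → fv pk ∉ T →
      (∀ x, (fv k :: T).getLast? = some x → ¬ F x) →
      ∃ l : List (Fin 15), List.Chain' TF.Adj (k :: l) ∧ (k :: l).Nodup ∧
        (∀ j, fv j ∈ (fv k :: T) ↔ j ∈ (k :: l)) ∧ (k :: l).getLast? = some qk := by
  intro T
  induction T with
  | nil =>
    intro k _ _ _ _ hlast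
    exact absurd (hF k) (hlast (fv k) rfl)
  | cons x T ih =>
    intro k hch hnd hPe hpk hlast
    by_cases hx : F x
    · obtain ⟨k', rfl⟩ := hfv x hx
      have hAkk' : A (fv k) (fv k') := (List.isChain_cons_cons.mp hch).1
      obtain ⟨l, c1, c2, c3, c4⟩ := ih k' (List.isChain_cons_cons.mp hch).2
        (List.nodup_cons.mp hnd).2
        (fun h => hPe (List.mem_cons_of_mem _ h))
        (fun h => hpk (List.mem_cons_of_mem _ h))
        (fun z hz => hlast z (by rwa [List.getLast?_cons_cons]))
      refine ⟨k' :: l, List.isChain_cons_cons.mpr ⟨hint k k' hAkk', c1⟩, ?_, ?_, ?_⟩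
      · rw [List.nodup_cons]
        refine ⟨fun h => ?_, c2⟩
        exact (List.nodup_cons.mp hnd).1 ((c3 k).mpr h)
      · intro j
        rw [List.mem_cons, List.mem_cons (a := j)]
        constructor
        · rintro (h | h)
          · exact Or.inl (hinj h)
          · exact Or.inr ((c3 j).mp h)
        · rintro (rfl | h)
          · exact Or.inl rfl
          · exact Or.inr ((c3 j).mpr h)
      · rwa [List.getLast?_cons_cons]
    · have hA : A (fv k) x := (List.isChain_cons_cons.mp hch).1
      rcases hcross x (fv k) (hsymm _ _ hA) hx (hF k) with ⟨rfl, _⟩ | ⟨rfl, hk⟩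
      · exact absurd (List.mem_cons_self) hPe
      · have hkqk : k = qk := hinj hk
        have hnoT : ∀ j, fv j ∉ (x :: T) := by
          apply out2 hF hcross T x (List.isChain_cons_cons.mp hch).2 hx
          · exact fun h => hpk (List.mem_cons_of_mem _ h)
          · rw [← hk]
            exact fun h => (List.nodup_cons.mp hnd).1 (List.mem_cons_of_mem _ h)
        refine ⟨[], List.isChain_singleton _, by simp, ?_, by simp [hkqk]⟩
        intro j
        simp only [List.mem_cons, List.mem_singleton]
        constructor
        · rintro (h | h)
          · exact Or.inl (hinj h)
          · exact absurd (List.mem_cons.mpr h) (hnoT j)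
        · rintro (rfl | h)
          · exact Or.inl rfl
          · simp at h
        
lemma outA (hF : ∀ k, F (fv k)) (hinj : Function.Injective fv)
    (hfv : ∀ x, F x → ∃ k, x = fv k)
    (hsymm : ∀ x y, A x y → A y x)
    (hint : ∀ j k, A (fv j) (fv k) → TF.Adj j k)
    (hcross : ∀ x y, A x y → ¬ F x → F y → (x = Pext ∧ y = fv pk) ∨ (x = Qext ∧ y = fv qk)) :
    ∀ (T : List V) (u : V), List.Chain' A (u :: T) → (u :: T).Nodup → ¬ F u →
      (∀ x, (u :: T).getLast? = some x → ¬ F x) → (∀ k, fv k ∈ T) →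
      ∃ l : List (Fin 15), List.Chain' TF.Adj l ∧ l.Nodup ∧ (∀ k, k ∈ l) ∧
        ((l.head? = some pk ∧ l.getLast? = some qk) ∨
         (l.head? = some qk ∧ l.getLast? = some pk)) := by
  intro T
  induction T with
  | nil =>
    intro u _ _ _ _ hcov
    exact absurd (hcov pk) List.not_mem_nil
  | cons x T ih =>
    intro u hch hnd hu hlast hcov
    by_cases hx : F x
    · have hA : A u x := (List.isChain_cons_cons.mp hch).1
      rcases hcross u x hA hu hx with ⟨hu', hx'⟩ | ⟨hu', hx'⟩
      · subst hx'
        obtain ⟨l, c1, c2, c3, c4⟩ := ins hF hinj hfv hsymm hint hcross T pk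
          (List.isChain_cons_cons.mp hch).2 (List.nodup_cons.mp hnd).2
          (fun h => (List.nodup_cons.mp hnd).1 (hu' ▸ List.mem_cons_of_mem _ h))
          (fun h => (List.nodup_cons.mp (List.nodup_cons.mp hnd).2).1 h)
          (fun z hz => hlast z (by rwa [List.getLast?_cons_cons]))
        refine ⟨pk :: l, c1, c2, ?_, Or.inl ⟨rfl, c4⟩⟩
        intro k
        exact (c3 k).mp (hcov k)
      · subst hx'
        have hcross' : ∀ x y, A x y → ¬ F x → F y →
            (x = Qext ∧ y = fv qk) ∨ (x = Pext ∧ y = fv pk) :=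
          fun a b h1 h2 h3 => (hcross a b h1 h2 h3).symm
        obtain ⟨l, c1, c2, c3, c4⟩ := ins hF hinj hfv hsymm hint hcross' T qk
          (List.isChain_cons_cons.mp hch).2 (List.nodup_cons.mp hnd).2
          (fun h => (List.nodup_cons.mp hnd).1 (hu' ▸ List.mem_cons_of_mem _ h))
          (fun h => (List.nodup_cons.mp (List.nodup_cons.mp hnd).2).1 h)
          (fun z hz => hlast z (by rwa [List.getLast?_cons_cons]))
        refine ⟨qk :: l, c1, c2, ?_, Or.inr ⟨rfl, c4⟩⟩
        intro k
        exact (c3 k).mp (hcov k)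
    · apply ih x (List.isChain_cons_cons.mp hch).2 (List.nodup_cons.mp hnd).2 hx
        (fun z hz => hlast z (by rwa [List.getLast?_cons_cons]))
      intro k
      rcases List.mem_cons.mp (hcov k) with h | h
      · exact absurd (h ▸ hF k) hx
      · exact h

end Abstract

lemma noham' (l : List (Fin 15)) (hch : List.Chain' TF.Adj l) (hnd : l.Nodup)
    (hcov : ∀ k, k ∈ l) (hh : l.head? = some 1) (hl : l.getLast? = some 0) : False := by
  apply noham l.reverse
  · exact List.isChain_reverse.mpr (List.IsChain.imp (fun a b h => h.symm) hch)
  · exact List.nodup_reverse.mpr hnd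
  · exact fun k => List.mem_reverse.mpr (hcov k)
  · rwa [List.head?_reverse]
  · rwa [List.getLast?_reverse]

lemma chainE {V : Type*} {G : SimpleGraph V} (E : Sym2 V → Prop) :
    ∀ {a b : V} (W : G.Walk a b), (∀ e ∈ W.edges, E e) →
      List.Chain' (fun x y => G.Adj x y ∧ E s(x, y)) W.support := by
  intro a b W
  induction W with
  | nil => intro _; exact List.isChain_singleton _
  | @cons a c b h W ih =>
    intro hE
    rw [SimpleGraph.Walk.support_cons, W.support_eq_cons]
    refine List.isChain_cons_cons.mpr ⟨⟨h, hE _ ?_⟩, ?_⟩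
    · simp [SimpleGraph.Walk.edges_cons]
    · rw [← W.support_eq_cons]
      exact ih (fun e he => hE e (by simp [SimpleGraph.Walk.edges_cons, he]))

/-- In any graph obtained from a prism by TF-inflation of a vertex `v`,
every hamiltonian cycle must contain the pillar edge incident to the inserted Tutte
Fragment, i.e. the edge incident with the vertex `c` of that fragment. -/
theorem stmt13 (n : ℕ) (hn : 3 ≤ n) (S : Finset (PV n)) (orient : PV n → Bool)
    (v : PV n) (hv : v ∈ S) {x : InflV n S} (C : (inflPrism n S orient).Walk x x)
    (hC : C.IsHamiltonianCycle) :
    s(liftV S orient v (v.1, !v.2), liftV S orient (v.1, !v.2) v) ∈ C.edges := by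
  by_contra hpil
  haveI : NeZero n := ⟨by omega⟩
  -- arithmetic facts in `ZMod n`
  have h1 : (1 : ZMod n) ≠ 0 := by
    intro h
    have h' : ((1 : ℕ) : ZMod n) = 0 := by exact_mod_cast h
    have := Nat.le_of_dvd one_pos ((ZMod.natCast_eq_zero_iff 1 n).mp h')
    omega
  have h2 : (2 : ZMod n) ≠ 0 := by
    intro h
    have h' : ((2 : ℕ) : ZMod n) = 0 := by exact_mod_cast h
    have := Nat.le_of_dvd two_pos ((ZMod.natCast_eq_zero_iff 2 n).mp h')
    omega
  have hv1 : v.1 + 1 ≠ v.1 := fun h => h1 (by linear_combination h)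
  have hv2 : v.1 - 1 ≠ v.1 := fun h => h1 (by linear_combination -h)
  have h12 : v.1 + 1 ≠ v.1 - 1 := fun h => h2 (by linear_combination h)
  -- local objects
  set F : InflV n S → Prop := fun z => z.val.1 = v with hFdef
  set fv : Fin 15 → InflV n S := fun k => ⟨(v, k), Or.inl hv⟩ with hfvdef
  set Pext : InflV n S := liftV S orient (v.1 + 1, v.2) v with hPdef
  set Qext : InflV n S := liftV S orient (v.1 - 1, v.2) v with hQdef
  set pk : Fin 15 := port S orient v (v.1 + 1, v.2) with hpkdef
  set qk : Fin 15 := port S orient v (v.1 - 1, v.2) with hqkdef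
  have hpk : pk = if orient v then 0 else 1 := by
    rw [hpkdef]
    simp [port, hv, (show ¬ (v.1 = v.1 + 1) from fun h => hv1 h.symm)]
  have hqk : qk = if orient v then 1 else 0 := by
    rw [hqkdef]
    simp [port, hv, (show ¬ (v.1 = v.1 - 1) from fun h => hv2 h.symm),
      (show ¬ (v.1 - 1 = v.1 + 1) from fun h => h12 h.symm)]
  -- rotate the cycle to start outside the fragment
  set z0 : InflV n S := ⟨((v.1 + 1, !v.2), 0), Or.inr rfl⟩ with hz0def
  have hz0 : z0 ∈ C.support := hC.mem_support z0
  set C0 := C.rotate z0 hz0 with hC0def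
  have hcyc : C0.IsCycle := hC.isCycle.rotate hz0
  have hrotE : C0.edges ~r C.edges := C.rotate_edges z0 hz0
  have hpil0 : s(liftV S orient v (v.1, !v.2), liftV S orient (v.1, !v.2) v) ∉ C0.edges :=
    fun h => hpil (hrotE.perm.mem_iff.mp h)
  have hrotS : C0.support.tail ~r C.support.tail := C.support_rotate z0 hz0
  have hcount := (Walk.isHamiltonianCycle_iff_isCycle_and_support_count_tail_eq_one.mp hC).2
  have hcov0 : ∀ y : InflV n S, y ∈ C0.support.tail := fun y =>
    hrotS.perm.mem_iff.mpr (List.count_pos_iff.mp (by rw [hcount y]; norm_num))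
  have hnd0 : C0.support.tail.Nodup := hcyc.support_nodup
  have hchain : List.Chain' (fun a b => (inflPrism n S orient).Adj a b ∧ s(a,b) ∈ C0.edges)
      C0.support := chainE (fun e => e ∈ C0.edges) C0 (fun e he => he)
  obtain ⟨z1, T, hT⟩ : ∃ z1 T, C0.support.tail = z1 :: T := by
    cases h : C0.support.tail with
    | nil => exact absurd (h ▸ hcov0 z0) List.not_mem_nil
    | cons a t => exact ⟨a, t, rfl⟩
  have hsupp : C0.support = z0 :: z1 :: T := by rw [C0.support_eq_cons, hT]
  have hlastT : (z1 :: T).getLast? = some z0 := by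
    have h2 : C0.support.getLast? = some z0 := by
      rw [List.getLast?_eq_getLast (by simp)]
      exact congrArg some C0.getLast_support
    rw [hsupp, List.getLast?_cons_cons] at h2
    exact h2
  -- basic facts about the fragment vertices
  have hFfv : ∀ k : Fin 15, F (fv k) := fun k => rfl
  have hz0F : ¬ F z0 := fun h => hv1 (congrArg Prod.fst h)
  have hinj : Function.Injective fv := fun a b h => congrArg (fun z : InflV n S => z.val.2) h
  have hfvAll : ∀ z : InflV n S, F z → ∃ k, z = fv k := by
    intro z hz
    exact ⟨z.val.2, Subtype.ext (Prod.ext hz rfl)⟩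
  have hPeF : ¬ F Pext := fun h => hv1 (congrArg Prod.fst h)
  have hQeF : ¬ F Qext := fun h => hv2 (congrArg Prod.fst h)
  have hsymmA : ∀ a b : InflV n S,
      ((inflPrism n S orient).Adj a b ∧ s(a,b) ∈ C0.edges) →
      ((inflPrism n S orient).Adj b a ∧ s(b,a) ∈ C0.edges) :=
    fun a b h => ⟨h.1.symm, by rw [Sym2.eq_swap]; exact h.2⟩
  have hintA : ∀ j k : Fin 15,
      ((inflPrism n S orient).Adj (fv j) (fv k) ∧ s(fv j, fv k) ∈ C0.edges) →
      TF.Adj j k := by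
    rintro j k ⟨hadj, -⟩
    rw [inflPrism, SimpleGraph.fromRel_adj] at hadj
    obtain ⟨hne, h | h⟩ := hadj
    · rcases h with ⟨_, _, h3⟩ | ⟨h1, _⟩
      · exact h3
      · exact absurd rfl h1
    · rcases h with ⟨_, _, h3⟩ | ⟨h1, _⟩
      · exact h3.symm
      · exact absurd rfl h1
  have hcrossA : ∀ a b : InflV n S,
      ((inflPrism n S orient).Adj a b ∧ s(a,b) ∈ C0.edges) → ¬ F a → F b →
      (a = Pext ∧ b = fv pk) ∨ (a = Qext ∧ b = fv qk) := by
    rintro a b ⟨hadj, hmem⟩ ha hb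
    rw [inflPrism, SimpleGraph.fromRel_adj] at hadj
    obtain ⟨hne, hrel⟩ := hadj
    have hb' : b.val.1 = v := hb
    have ha' : a.val.1 ≠ v := ha
    have key : (prismG n).Adj a.val.1 v ∧ a.val.2 = port S orient a.val.1 v ∧
        b.val.2 = port S orient v a.val.1 := by
      rcases hrel with (⟨hx1, _, _⟩ | ⟨hx1, hx2, hx3, hx4⟩) | (⟨hx1, _, _⟩ | ⟨hx1, hx2, hx3, hx4⟩)
      · exact absurd (hx1.trans hb') ha'
      · exact ⟨hb' ▸ hx2, hb' ▸ hx3, hb' ▸ hx4⟩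
      · exact absurd (hx1 ▸ hb') ha'
      · exact ⟨hb' ▸ hx2.symm, hb' ▸ hx4, hb' ▸ hx3⟩
    obtain ⟨hprism, ha2, hb2⟩ := key
    have hp2 : ((a.val.1.1 = v.1 ∧ a.val.1.2 ≠ v.2) ∨ (a.val.1.2 = v.2 ∧ v.1 = a.val.1.1 + 1))
        ∨ ((v.1 = a.val.1.1 ∧ v.2 ≠ a.val.1.2) ∨ (v.2 = a.val.1.2 ∧ a.val.1.1 = v.1 + 1)) := by
      have h := hprism
      rw [prismG, SimpleGraph.fromRel_adj] at h
      exact h.2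
    have pillarCase : a.val.1.1 = v.1 → a.val.1.2 ≠ v.2 → False := by
      intro c1 c2
      have hsnd : a.val.1.2 = !v.2 := by
        cases h' : v.2 <;> cases h'' : a.val.1.2 <;> simp_all
      have ha1 : a.val.1 = ((v.1, !v.2) : PV n) := Prod.ext c1 hsnd
      have hbv : b = liftV S orient v (v.1, !v.2) := by
        apply Subtype.ext
        show b.val = (v, port S orient v (v.1, !v.2))
        exact Prod.ext hb' (hb2.trans (by rw [ha1]))
      have hav : a = liftV S orient (v.1, !v.2) v := by
        apply Subtype.ext
        show a.val = ((v.1, !v.2), port S orient (v.1, !v.2) v)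
        exact Prod.ext ha1 (ha2.trans (by rw [ha1]))
      apply hpil0
      rw [hav, hbv] at hmem
      rwa [Sym2.eq_swap] at hmem
    rcases hp2 with (⟨c1, c2⟩ | ⟨c1, c2⟩) | (⟨c1, c2⟩ | ⟨c1, c2⟩)
    · exact (pillarCase c1 c2).elim
    · -- a sits over `v.1 - 1`
      right
      have ha1 : a.val.1 = ((v.1 - 1, v.2) : PV n) := Prod.ext (eq_sub_of_add_eq c2.symm) c1
      constructor
      · apply Subtype.ext
        show a.val = ((v.1 - 1, v.2), port S orient (v.1 - 1, v.2) v)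
        exact Prod.ext ha1 (ha2.trans (by rw [ha1]))
      · apply Subtype.ext
        show b.val = (v, port S orient v (v.1 - 1, v.2))
        exact Prod.ext hb' (hb2.trans (by rw [ha1]))
    · exact (pillarCase c1.symm (fun h => c2 h.symm)).elim
    · -- a sits over `v.1 + 1`
      left
      have ha1 : a.val.1 = ((v.1 + 1, v.2) : PV n) := Prod.ext c2 c1.symm
      constructor
      · apply Subtype.ext
        show a.val = ((v.1 + 1, v.2), port S orient (v.1 + 1, v.2) v)
        exact Prod.ext ha1 (ha2.trans (by rw [ha1]))
      · apply Subtype.ext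
        show b.val = (v, port S orient v (v.1 + 1, v.2))
        exact Prod.ext hb' (hb2.trans (by rw [ha1]))
  -- the vertex after `z0` is outside the fragment
  have hAz01 : (inflPrism n S orient).Adj z0 z1 ∧ s(z0, z1) ∈ C0.edges := by
    have h := hchain
    rw [hsupp] at h
    exact (List.isChain_cons_cons.mp h).1
  have hz1F : ¬ F z1 := by
    intro h
    rcases hcrossA z0 z1 hAz01 hz0F h with ⟨h0, _⟩ | ⟨h0, _⟩
    · have := congrArg (fun z : InflV n S => z.val.1.2) h0
      simp [hz0def, hPdef, liftV] at this
    · have := congrArg (fun z : InflV n S => z.val.1.2) h0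
      simp [hz0def, hQdef, liftV] at this
  -- extract the hamiltonian path of the fragment
  obtain ⟨l, hl1, hl2, hl3, hl4⟩ :=
    outA hFfv hinj hfvAll hsymmA hintA hcrossA T z1
      (by
        have h := hchain
        rw [hsupp] at h
        exact (List.isChain_cons_cons.mp h).2)
      (by rw [← hT]; exact hnd0)
      hz1F
      (by
        intro z hz
        rw [hlastT] at hz
        have : z = z0 := by injection hz.symm
        exact this ▸ hz0F)
      (by
        intro k
        have h := hcov0 (fv k)
        rw [hT] at h
        rcases List.mem_cons.mp h with h' | h'
        · exact absurd (h' ▸ hFfv k) hz1F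
        · exact h')
  -- conclude using the nonexistence of a hamiltonian a-b path in TF
  cases horf : orient v with
  | true =>
    rw [horf] at hpk hqk
    simp at hpk hqk
    rcases hl4 with ⟨hh, hlst⟩ | ⟨hh, hlst⟩
    · exact noham l hl1 hl2 hl3 (hpk ▸ hh) (hqk ▸ hlst)
    · exact noham' l hl1 hl2 hl3 (hqk ▸ hh) (hpk ▸ hlst)
  | false =>
    rw [horf] at hpk hqk
    simp at hpk hqk
    rcases hl4 with ⟨hh, hlst⟩ | ⟨hh, hlst⟩
    · exact noham' l hl1 hl2 hl3 (hpk ▸ hh) (hqk ▸ hlst)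
    · exact noham l hl1 hl2 hl3 (hqk ▸ hh) (hpk ▸ hlst)
end
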